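/- If P on {0,1}^Λ satisfies the FKG lattice condition, then for every K ⊆ Λ and α ∈ {0,1}^K, the folded function P^{K,α}(ω) := P(α·ω)·P(α·ω̄) on {0,1}^{K^c} also satisfies the FKG lattice condition. -/
import Mathlib


variable {Λ : Type*}

/-- Concatenation `α·ω`: agrees with `α` on `K` and with `ω` on `Kᶜ`. -/
def glue (K : Finset Λ) [DecidableEq Λ] (α ω : Λ → Bool) : Λ → Bool :=
  fun i => if i ∈ K then α i else ω i

/-- Coordinatewise flip. -/
def flipC (ω : Λ → Bool) : Λ → Bool := fun i => !ω i

/-- if `P` satisfies the FKG lattice condition, then so does every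
folding `P^{K,α}(ω) = P(α·ω)·P(α·ω̄)`. -/
theorem folding_preserves_fkg [DecidableEq Λ] [Fintype Λ]
    (P : (Λ → Bool) → ℝ) (h0 : ∀ ω, 0 ≤ P ω)
    (hfkg : ∀ ω ω' : Λ → Bool,
      P ω * P ω' ≤ P (fun i => ω i || ω' i) * P (fun i => ω i && ω' i))
    (K : Finset Λ) (α : Λ → Bool) :
    ∀ ω ω' : Λ → Bool,
      (P (glue K α ω) * P (glue K α (flipC ω))) *
        (P (glue K α ω') * P (glue K α (flipC ω'))) ≤
      (P (glue K α fun i => ω i || ω' i) *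
          P (glue K α (flipC fun i => ω i || ω' i))) *
        (P (glue K α fun i => ω i && ω' i) *
          P (glue K α (flipC fun i => ω i && ω' i))) := by
  intro ω ω'
  have e1 : (fun i => glue K α ω i || glue K α ω' i) = glue K α (fun i => ω i || ω' i) := by
    funext i; simp only [glue]; split <;> simp
  have e2 : (fun i => glue K α ω i && glue K α ω' i) = glue K α (fun i => ω i && ω' i) := by
    funext i; simp only [glue]; split <;> simp
  have e3 : (fun i => glue K α (flipC ω) i || glue K α (flipC ω') i) =
      glue K α (flipC fun i => ω i && ω' i) := by
    funext i; simp only [glue, flipC]; split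
    · simp
    · cases ω i <;> cases ω' i <;> rfl
  have e4 : (fun i => glue K α (flipC ω) i && glue K α (flipC ω') i) =
      glue K α (flipC fun i => ω i || ω' i) := by
    funext i; simp only [glue, flipC]; split
    · simp
    · cases ω i <;> cases ω' i <;> rfl
  have h1 := hfkg (glue K α ω) (glue K α ω')
  have h2 := hfkg (glue K α (flipC ω)) (glue K α (flipC ω'))
  rw [e1, e2] at h1
  rw [e3, e4] at h2
  have key := mul_le_mul h1 h2 (mul_nonneg (h0 _) (h0 _))
    (mul_nonneg (h0 _) (h0 _))
  nlinarith [key]
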